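/- Let A be a small additive category. Add(A, Ab) is 1-hereditary (every finitely presented functor has projective dimension ≤ 1) if and only if: (a) every morphism in A has a pseudo-cokernel, and (b) for every morphism f : Y → X with pseudo-cokernel f₁ : X → X₁ there exists an endomorphism α : X → X such that f₁ ∘ α = 0 and α ∘ f = f. -/

import Mathlib

open CategoryTheory Limits Opposite

universe u

variable (𝒜 : Type u) [SmallCategory 𝒜] [Preadditive 𝒜] [HasFiniteBiproducts 𝒜]

/-- A morphism `f : Y ⟶ X` of `𝒜` has a pseudo `m`-cokernel: a chain
`X ⟶ W₀ ⟶ W₁ ⟶ ⋯` such that applying `Hom(-, Z)` yields an exact sequence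
`Hom(W_{m-1}, Z) → ⋯ → Hom(W₀, Z) → Hom(X, Z) → Hom(Y, Z)` for every `Z`.
(Every morphism is a pseudo `0`-cokernel of itself.) -/
def HasPseudoCoker (m : ℕ) {Y X : 𝒜} (f : Y ⟶ X) : Prop :=
  m = 0 ∨ ∃ (W : ℕ → 𝒜) (d₀ : X ⟶ W 0) (d : ∀ i : ℕ, W i ⟶ W (i + 1)),
    (∀ (Z : 𝒜) (u : X ⟶ Z), f ≫ u = 0 ↔ ∃ v : W 0 ⟶ Z, u = d₀ ≫ v) ∧
    (2 ≤ m → ∀ (Z : 𝒜) (u : W 0 ⟶ Z), d₀ ≫ u = 0 ↔ ∃ v : W 1 ⟶ Z, u = d 0 ≫ v) ∧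
    (∀ i : ℕ, i + 3 ≤ m → ∀ (Z : 𝒜) (u : W (i + 1) ⟶ Z),
      d i ≫ u = 0 ↔ ∃ v : W (i + 2) ⟶ Z, u = d (i + 1) ≫ v)

/-- An additive functor `F : 𝒜 ⥤ Ab` is of type `FPₙ` if it admits an exact resolution
`Hom(Xₙ, -) → ⋯ → Hom(X₀, -) → F → 0` by representable functors (exactness is tested
pointwise). -/
def FunctorIsFPn (n : ℕ) (F : 𝒜 ⥤ AddCommGrpCat.{u}) : Prop :=
  ∃ (X : ℕ → 𝒜) (g : ∀ s : ℕ, X s ⟶ X (s + 1))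
    (ε : preadditiveCoyoneda.obj (op (X 0)) ⟶ F),
    (∀ Z : 𝒜, Function.Surjective (ε.app Z)) ∧
    (0 < n → ∀ (Z : 𝒜) (u : X 0 ⟶ Z), ε.app Z u = 0 ↔ ∃ v : X 1 ⟶ Z, u = g 0 ≫ v) ∧
    (∀ s : ℕ, s + 1 < n → ∀ (Z : 𝒜) (u : X (s + 1) ⟶ Z),
      g s ≫ u = 0 ↔ ∃ v : X (s + 2) ⟶ Z, u = g (s + 1) ≫ v)

variable {𝒜}

/-- The image subfunctor `Im(f^*) ⊆ Hom(Y, -)` of the natural transformation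
`f^* : Hom(X, -) ⟶ Hom(Y, -)` induced by `f : Y ⟶ X`. -/
def imSet {Y X : 𝒜} (f : Y ⟶ X) (Z : 𝒜) : AddSubgroup (Y ⟶ Z) where
  carrier := {u | ∃ v : X ⟶ Z, u = f ≫ v}
  zero_mem' := ⟨0, by simp⟩
  add_mem' := by
    rintro u u' ⟨v, rfl⟩ ⟨v', rfl⟩
    exact ⟨v + v', by rw [Preadditive.comp_add]⟩
  neg_mem' := by
    rintro u ⟨v, rfl⟩
    exact ⟨-v, by rw [Preadditive.comp_neg]⟩

/-- The image of `f^* : Hom(X, -) ⟶ Hom(Y, -)` as a functor `𝒜 ⥤ Ab`. -/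
def imageFunctor {Y X : 𝒜} (f : Y ⟶ X) : 𝒜 ⥤ AddCommGrpCat.{u} where
  obj Z := AddCommGrpCat.of ↥(imSet f Z)
  map {Z Z'} h := AddCommGrpCat.ofHom <|
    AddMonoidHom.mk' (fun u => ⟨u.1 ≫ h, by
      obtain ⟨v, hv⟩ := u.2
      exact ⟨v ≫ h, by rw [hv, Category.assoc]⟩⟩)
      (fun u u' => Subtype.ext (Preadditive.add_comp _ _ _ _ _ _))
  map_id Z := by
    ext u
    exact Category.comp_id _
  map_comp {Z Z' Z''} h h' := by
    ext u
    exact (Category.assoc _ _ _).symm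

/-- Projectivity of a functor with respect to pointwise-surjective natural transformations
of additive functors (i.e. projectivity in `Add(𝒜, Ab)`). -/
def IsProjectiveFunctor (P : 𝒜 ⥤ AddCommGrpCat.{u}) : Prop :=
  ∀ (G H : 𝒜 ⥤ AddCommGrpCat.{u}), G.Additive → H.Additive →
    ∀ (ψ : G ⟶ H), (∀ Z : 𝒜, Function.Surjective (ψ.app Z)) →
    ∀ φ : P ⟶ H, ∃ σ : P ⟶ G, σ ≫ ψ = φ

instance imageFunctor_additive {Y X : 𝒜} (f : Y ⟶ X) : (imageFunctor f).Additive where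
  map_add := by
    intro Z Z' h h'
    ext u
    exact Subtype.ext (Preadditive.comp_add _ _ _ u.1 h h')

def imPi {Y X : 𝒜} (f : Y ⟶ X) : preadditiveCoyoneda.obj (op X) ⟶ imageFunctor f where
  app Z := AddCommGrpCat.ofHom <|
    AddMonoidHom.mk' (fun u => ⟨f ≫ u, u, rfl⟩)
      (fun u u' => Subtype.ext (Preadditive.comp_add _ _ _ _ _ _))
  naturality Z Z' h := by
    ext u
    exact Subtype.ext (Category.assoc f (u : X ⟶ Z) h).symm

omit [HasFiniteBiproducts 𝒜] in
theorem exists_alpha {Y X : 𝒜} (f : Y ⟶ X) (hf : IsProjectiveFunctor (imageFunctor f)) :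
    ∃ α : X ⟶ X, f ≫ α = f ∧ ∀ (Z : 𝒜) (u : X ⟶ Z), f ≫ u = 0 → α ≫ u = 0 := by
  have hsurj : ∀ Z : 𝒜, Function.Surjective ((imPi f).app Z) := by
    rintro Z ⟨u, v, hv⟩
    exact ⟨v, Subtype.ext hv.symm⟩
  obtain ⟨σ, hσ⟩ := hf (preadditiveCoyoneda.obj (op X)) (imageFunctor f) inferInstance
    inferInstance (imPi f) hsurj (𝟙 (imageFunctor f))
  set e : ↥(imSet f X) := ⟨f, 𝟙 X, (Category.comp_id f).symm⟩ with he
  refine ⟨σ.app X e, ?_, ?_⟩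
  · have := congrArg (fun t => (t.app X e : ↥(imSet f X)).1) hσ
    exact this
  · intro Z u hu
    have hnat : (σ.app Z) ((imageFunctor f).map u e) = (σ.app X) e ≫ u :=
      congrArg (fun t => t e) (σ.naturality u)
    have h0 : (imageFunctor f).map u e = 0 := Subtype.ext hu
    rw [h0, map_zero] at hnat
    exact hnat.symm

omit [HasFiniteBiproducts 𝒜] in
theorem imageFunctor_projective {Y X X₁ : 𝒜} (f : Y ⟶ X) (f₁ : X ⟶ X₁) (α : X ⟶ X)
    (hpc : ∀ (Z : 𝒜) (u : X ⟶ Z), f ≫ u = 0 ↔ ∃ v : X₁ ⟶ Z, u = f₁ ≫ v)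
    (hα1 : α ≫ f₁ = 0) (hα2 : f ≫ α = f) : IsProjectiveFunctor (imageFunctor f) := by
  intro G H hG hH ψ hψ φ
  have key : ∀ {Z : 𝒜} (v v' : X ⟶ Z), f ≫ v = f ≫ v' → α ≫ v = α ≫ v' := by
    intro Z v v' h
    have h0 : f ≫ (v - v') = 0 := by rw [Preadditive.comp_sub, h, sub_self]
    obtain ⟨c, hc⟩ := (hpc Z (v - v')).mp h0
    have h1 : α ≫ (v - v') = 0 := by
      rw [hc, ← Category.assoc, hα1, Limits.zero_comp]
    rw [Preadditive.comp_sub, sub_eq_zero] at h1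
    exact h1
  set e : ↥(imSet f X) := ⟨f, 𝟙 X, (Category.comp_id f).symm⟩ with he
  obtain ⟨g, hg⟩ := hψ X (φ.app X e)
  -- witness extraction
  have hw : ∀ {Z : 𝒜} (u : ↥(imSet f Z)), u.1 = f ≫ u.2.choose := fun u => u.2.choose_spec
  refine ⟨{ app := fun Z => AddCommGrpCat.ofHom <|
      AddMonoidHom.mk' (fun u => G.map (α ≫ u.2.choose) g) ?_, naturality := ?_ }, ?_⟩
  · intro u u'
    have h1 : f ≫ (u + u').2.choose = f ≫ (u.2.choose + u'.2.choose) := by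
      rw [Preadditive.comp_add, ← hw u, ← hw u', ← hw (u + u')]
      rfl
    have h2 : α ≫ (u + u').2.choose = α ≫ u.2.choose + α ≫ u'.2.choose := by
      rw [key _ _ h1, Preadditive.comp_add]
    show G.map (α ≫ (u + u').2.choose) g
        = G.map (α ≫ u.2.choose) g + G.map (α ≫ u'.2.choose) g
    rw [h2, hG.map_add]
    rfl
  · intro Z Z' h
    ext u
    have h1 : f ≫ ((imageFunctor f).map h u).2.choose = f ≫ (u.2.choose ≫ h) := by
      rw [← hw ((imageFunctor f).map h u), ← Category.assoc, ← hw u]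
      rfl
    have h2 : α ≫ ((imageFunctor f).map h u).2.choose = (α ≫ u.2.choose) ≫ h := by
      rw [key _ _ h1, Category.assoc]
    show G.map (α ≫ ((imageFunctor f).map h u).2.choose) g
        = G.map h (G.map (α ≫ u.2.choose) g)
    rw [h2, G.map_comp]
    rfl
  · ext Z u
    show ψ.app Z (G.map (α ≫ u.2.choose) g) = φ.app Z u
    have hnat : ψ.app Z (G.map (α ≫ u.2.choose) g)
        = H.map (α ≫ u.2.choose) (ψ.app X g) :=
      congrArg (fun t => t g) (ψ.naturality (α ≫ u.2.choose))
    rw [hnat, hg]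
    have hφ : H.map (α ≫ u.2.choose) (φ.app X e)
        = φ.app Z ((imageFunctor f).map (α ≫ u.2.choose) e) :=
      (congrArg (fun t => t e) (φ.naturality (α ≫ u.2.choose))).symm
    rw [hφ]
    congr 1
    apply Subtype.ext
    show f ≫ (α ≫ u.2.choose) = u.1
    rw [← Category.assoc, hα2, ← hw u]

/-- For a small additive category `𝒜`, the functor category `Add(𝒜, Ab)` is
`1`-hereditary — every finitely presented functor `F = coker(f^*)` has projective dimension
at most `1`, equivalently `Im(f^*)` is projective for every `f` — if and only if
(a) every morphism of `𝒜` has a pseudo-cokernel, and (b) for every `f : Y ⟶ X` with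
pseudo-cokernel `f₁ : X ⟶ X₁` there is `α : X ⟶ X` with `f₁ ∘ α = 0` and `α ∘ f = f`. -/
theorem functor_category_one_hereditary_iff (𝒜 : Type u) [SmallCategory 𝒜] [Preadditive 𝒜]
    [HasFiniteBiproducts 𝒜] :
    (∀ (Y X : 𝒜) (f : Y ⟶ X), IsProjectiveFunctor (imageFunctor f)) ↔
    ((∀ (Y X : 𝒜) (f : Y ⟶ X), ∃ (X₁ : 𝒜) (f₁ : X ⟶ X₁),
        ∀ (Z : 𝒜) (u : X ⟶ Z), f ≫ u = 0 ↔ ∃ v : X₁ ⟶ Z, u = f₁ ≫ v) ∧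
     (∀ (Y X X₁ : 𝒜) (f : Y ⟶ X) (f₁ : X ⟶ X₁),
        (∀ (Z : 𝒜) (u : X ⟶ Z), f ≫ u = 0 ↔ ∃ v : X₁ ⟶ Z, u = f₁ ≫ v) →
        ∃ α : X ⟶ X, α ≫ f₁ = 0 ∧ f ≫ α = f)) := by
  constructor
  · intro h
    constructor
    · intro Y X f
      obtain ⟨α, hα1, hα2⟩ := exists_alpha f (h Y X f)
      refine ⟨X, 𝟙 X - α, fun Z u => ⟨fun hu => ⟨u, ?_⟩, ?_⟩⟩
      · rw [Preadditive.sub_comp, Category.id_comp, hα2 Z u hu, sub_zero]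
      · rintro ⟨v, rfl⟩
        rw [← Category.assoc, Preadditive.comp_sub, Category.comp_id, hα1,
          sub_self, Limits.zero_comp]
    · intro Y X X₁ f f₁ hpc
      have hff₁ : f ≫ f₁ = 0 := (hpc X₁ f₁).mpr ⟨𝟙 X₁, (Category.comp_id f₁).symm⟩
      obtain ⟨α, hα1, hα2⟩ := exists_alpha f (h Y X f)
      exact ⟨α, hα2 X₁ f₁ hff₁, hα1⟩
  · rintro ⟨hA, hB⟩ Y X f
    obtain ⟨X₁, f₁, hpc⟩ := hA Y X f
    obtain ⟨α, hα1, hα2⟩ := hB Y X X₁ f f₁ hpc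
    exact imageFunctor_projective f f₁ α hpc hα1 hα2
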